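/- Under the SAMP(γ) marginals with γ ∈ [0,1], for every i ∈ I and t one has E[SF_{i,t}] = ∏_{s<t} (1 − γ ∑_{f∈F_i} x_{f,s} p_{f,s}) ≥ 1 − γ, and for every f ∈ F and t one has E[χ_{f,t}] ≥ (1−γ)·γ·x_{f,t}·p_{f,t}. Consequently, for any profits w_{f,t} ≥ 0, the expected total profit satisfies E[∑_{t=1}^T ∑_{f∈F} w_{f,t} χ_{f,t}] ≥ γ(1−γ)·∑_{t,f} w_{f,t} x_{f,t} p_{f,t}; in particular, SAMP(γ) attains a γ(1−γ) fraction of the LP objective value, and hence a competitive ratio of at least γ(1−γ) for MP-KHD (Theorem: competitive analysis of SAMP(γ)). -/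

import Mathlib

open MeasureTheory ProbabilityTheory Finset

lemma samp_aux_prod_one_sub {ι : Type*} (S : Finset ι) (a : ι → ℝ)
    (h0 : ∀ s ∈ S, 0 ≤ a s) (h1 : ∀ s ∈ S, a s ≤ 1) :
    1 - ∑ s ∈ S, a s ≤ ∏ s ∈ S, (1 - a s) := by
  classical
  induction S using Finset.induction_on with
  | empty => simp
  | @insert c S hc ih =>
    rw [Finset.sum_insert hc, Finset.prod_insert hc]
    have h0' : ∀ s ∈ S, 0 ≤ a s := fun s hs => h0 s (Finset.mem_insert_of_mem hs)
    have h1' : ∀ s ∈ S, a s ≤ 1 := fun s hs => h1 s (Finset.mem_insert_of_mem hs)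
    have ihs := ih h0' h1'
    have hc0 := h0 c (Finset.mem_insert_self c S)
    have hc1 := h1 c (Finset.mem_insert_self c S)
    have hs0 : 0 ≤ ∑ s ∈ S, a s := Finset.sum_nonneg h0'
    nlinarith [mul_le_mul_of_nonneg_left ihs (by linarith : (0:ℝ) ≤ 1 - a c)]

open scoped Classical in
/-- competitive analysis of `SAMP(γ)`: in the round-process
model with `SAMP(γ)` marginals `P(W t f = 1) = γ x f t p f t`, `γ ∈ [0,1]`,
the safety indicators satisfy
`E[SF i t] = ∏_{s<t} (1 - γ ∑_{f:ι f=i} x f s p f s) ≥ 1 - γ`, and the success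
indicators `χ f t = W t f · SF (ι f) t` satisfy
`E[χ f t] ≥ (1-γ)·γ·x f t·p f t`.  Consequently, for any nonnegative profits
`w`, the expected total profit satisfies
`E[∑_t ∑_f w f t χ f t] ≥ γ(1-γ)·∑_{t,f} w f t x f t p f t`; in particular
`SAMP(γ)` attains a `γ(1-γ)` fraction of the LP objective value, hence a
competitive ratio of at least `γ(1-γ)` for MP-KHD. -/
theorem stmt_10 {Ω : Type*} [MeasureSpace Ω] [IsProbabilityMeasure (ℙ : Measure Ω)]
    {F I : Type*} [Fintype F] [Fintype I] [DecidableEq I]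
    (ι : F → I) (T : ℕ)
    (W : Fin T → F → Ω → ℝ)
    (hW01 : ∀ t f ω, W t f ω = 0 ∨ W t f ω = 1)
    (hWmeas : ∀ t f, Measurable (W t f))
    (hindep : iIndepFun
      (fun t ω => fun f => W t f ω) ℙ)
    (honce : ∀ᵐ ω ∂ℙ, ∀ t, ∑ f, W t f ω ≤ 1)
    (γ : ℝ) (hγ : γ ∈ Set.Icc (0 : ℝ) 1)
    (x p : F → Fin T → ℝ)
    (hx : ∀ f t, x f t ∈ Set.Icc (0 : ℝ) 1) (hp : ∀ f t, p f t ∈ Set.Icc (0 : ℝ) 1)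
    (hcap : ∀ i, ∑ t, ∑ f ∈ univ.filter (fun f => ι f = i), x f t * p f t ≤ 1)
    (hmarg : ∀ t f, ℙ {ω | W t f ω = 1} = ENNReal.ofReal (γ * x f t * p f t))
    (SF : I → Fin T → Ω → ℝ)
    (hSF : ∀ i t ω, SF i t ω =
      if ∀ s < t, ∀ f, ι f = i → W s f ω = 0 then 1 else 0)
    (χ : F → Fin T → Ω → ℝ)
    (hχ : ∀ f t ω, χ f t ω = W t f ω * SF (ι f) t ω) :
    (∀ i t, (∫ ω, SF i t ω) =
        ∏ s ∈ Finset.Iio t,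
          (1 - γ * ∑ f ∈ univ.filter (fun f => ι f = i), x f s * p f s) ∧
      1 - γ ≤ ∫ ω, SF i t ω) ∧
    (∀ f t, (1 - γ) * (γ * x f t * p f t) ≤ ∫ ω, χ f t ω) ∧
    (∀ w : F → Fin T → ℝ, (∀ f t, 0 ≤ w f t) →
      γ * (1 - γ) * ∑ t, ∑ f, w f t * x f t * p f t ≤
        ∫ ω, ∑ t, ∑ f, w f t * χ f t ω) := by
  obtain ⟨hγ0, hγ1⟩ := hγ
  -- notation
  set a : I → Fin T → ℝ :=
    fun i s => ∑ f ∈ univ.filter (fun f => ι f = i), x f s * p f s with ha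
  have hxp0 : ∀ f t, 0 ≤ x f t * p f t := fun f t =>
    mul_nonneg (hx f t).1 (hp f t).1
  have hxp1 : ∀ f t, x f t * p f t ≤ 1 := fun f t =>
    mul_le_one₀ (hx f t).2 (hp f t).1 (hp f t).2
  have ha0 : ∀ i s, 0 ≤ a i s := fun i s =>
    Finset.sum_nonneg fun f _ => hxp0 f s
  have ha1 : ∀ i s, a i s ≤ 1 := by
    intro i s
    refine le_trans ?_ (hcap i)
    exact Finset.single_le_sum (f := fun t => a i t) (fun t _ => ha0 i t) (mem_univ s)
  have hγa0 : ∀ i s, 0 ≤ γ * a i s := fun i s => mul_nonneg hγ0 (ha0 i s)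
  have hγa1 : ∀ i s, γ * a i s ≤ 1 := fun i s =>
    mul_le_one₀ hγ1 (ha0 i s) (ha1 i s)
  set V : Fin T → Ω → (F → ℝ) := fun t ω f => W t f ω with hV
  set Bs : I → Set (F → ℝ) := fun i => {v | ∀ f, ι f = i → v f = 0} with hBs
  have hBmeas : ∀ i, MeasurableSet (Bs i) := by
    intro i
    have : Bs i = ⋂ f, {v : F → ℝ | ι f = i → v f = 0} := by
      ext v; simp [hBs]
    rw [this]
    refine MeasurableSet.iInter fun f => ?_
    by_cases h : ι f = i
    · simp only [h, forall_true_left]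
      exact measurableSet_eq_fun (measurable_pi_apply f) measurable_const
    · simp [h]
  -- the null event
  have hnull : ℙ {ω | ¬ ∀ t, ∑ f, W t f ω ≤ 1} = 0 := by
    simpa [ae_iff] using honce
  -- single-round probability
  have hA : ∀ (s : Fin T) (i : I),
      ℙ (V s ⁻¹' Bs i) = ENNReal.ofReal (1 - γ * a i s) := by
    intro s i
    have hcompl : (V s ⁻¹' Bs i)ᶜ =
        ⋃ f ∈ univ.filter (fun f => ι f = i), {ω | W s f ω = 1} := by
      ext ω
      simp only [Set.mem_compl_iff, Set.mem_preimage, hBs, Set.mem_setOf_eq, hV,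
        Set.mem_iUnion, Finset.mem_filter, Finset.mem_univ, true_and, not_forall]
      constructor
      · rintro ⟨f, hf, hne⟩
        exact ⟨f, hf, (hW01 s f ω).resolve_left hne⟩
      · rintro ⟨f, hf, h1⟩
        exact ⟨f, hf, by rw [h1]; norm_num⟩
    have hdisj : Set.Pairwise (↑(univ.filter (fun f => ι f = i)))
        (Function.onFun (MeasureTheory.AEDisjoint ℙ) fun f => {ω | W s f ω = 1}) := by
      intro f _ g _ hfg
      refine measure_mono_null ?_ hnull
      rintro ω ⟨h1, h2⟩
      simp only [Set.mem_setOf_eq] at h1 h2 ⊢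
      intro hle
      have hsum : (2 : ℝ) ≤ ∑ h, W s h ω := by
        have : ∑ h ∈ ({f, g} : Finset F), W s h ω ≤ ∑ h, W s h ω := by
          refine Finset.sum_le_sum_of_subset_of_nonneg (Finset.subset_univ _) ?_
          intro h _ _
          rcases hW01 s h ω with h' | h' <;> simp [h']
        rw [Finset.sum_insert (by simpa using hfg), Finset.sum_singleton, h1, h2] at this
        linarith
      linarith [hle s]
    have hUnion : ℙ ((V s ⁻¹' Bs i)ᶜ) = ENNReal.ofReal (γ * a i s) := by
      rw [hcompl, measure_biUnion_finset₀ hdisj (fun f _ =>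
        (measurableSet_eq_fun (hWmeas s f) measurable_const).nullMeasurableSet)]
      have : ∀ f ∈ univ.filter (fun f => ι f = i),
          ℙ {ω | W s f ω = 1} = ENNReal.ofReal (γ * (x f s * p f s)) := by
        intro f _
        rw [hmarg s f, mul_assoc]
      rw [Finset.sum_congr rfl this, ← ENNReal.ofReal_sum_of_nonneg
        (fun f _ => mul_nonneg hγ0 (hxp0 f s)), ha, ← Finset.mul_sum]
    have hmA : MeasurableSet (V s ⁻¹' Bs i) := by
      refine (hBmeas i).preimage ?_
      exact measurable_pi_lambda _ fun f => hWmeas s f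
    have h1 : ℙ (V s ⁻¹' Bs i) = 1 - ENNReal.ofReal (γ * a i s) := by
      have htot := prob_add_prob_compl (μ := ℙ) hmA
      rw [hUnion] at htot
      have hle : ENNReal.ofReal (γ * a i s) ≤ 1 := by
        rw [← ENNReal.ofReal_one]
        exact ENNReal.ofReal_le_ofReal (hγa1 i s)
      rw [← htot]
      rw [ENNReal.add_sub_cancel_right (by simp)]
    rw [h1, ← ENNReal.ofReal_one, ← ENNReal.ofReal_sub _ (hγa0 i s)]
  -- SF as indicator
  set ESF : I → Fin T → Set Ω :=
    fun i t => ⋂ s ∈ Finset.Iio t, V s ⁻¹' Bs i with hESF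
  have hESFm : ∀ i t, MeasurableSet (ESF i t) := by
    intro i t
    refine MeasurableSet.biInter (Finset.Iio t).countable_toSet fun s _ => ?_
    exact (hBmeas i).preimage (measurable_pi_lambda _ fun f => hWmeas s f)
  have hSFind : ∀ i t, SF i t = Set.indicator (ESF i t) (fun _ => (1:ℝ)) := by
    intro i t
    funext ω
    rw [hSF]
    by_cases h : ∀ s < t, ∀ f, ι f = i → W s f ω = 0
    · rw [if_pos h, Set.indicator_of_mem]
      simp only [hESF, Set.mem_iInter, Finset.mem_Iio]
      intro s hs
      exact fun f hf => h s hs f hf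
    · rw [if_neg h, Set.indicator_of_notMem]
      simp only [hESF, Set.mem_iInter, Finset.mem_Iio]
      intro hmem
      exact h fun s hs f hf => hmem s hs f hf
  -- independence product for ESF
  have hPESF : ∀ i t, ℙ (ESF i t) = ∏ s ∈ Finset.Iio t, ENNReal.ofReal (1 - γ * a i s) := by
    intro i t
    have := hindep.measure_inter_preimage_eq_mul (Finset.Iio t)
      (sets := fun _ => Bs i) (fun s _ => hBmeas i)
    rw [hESF]
    rw [this]
    exact Finset.prod_congr rfl fun s _ => hA s i
  have hSFint : ∀ i t, (∫ ω, SF i t ω) = ∏ s ∈ Finset.Iio t, (1 - γ * a i s) := by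
    intro i t
    rw [hSFind i t]
    have : (∫ ω, Set.indicator (ESF i t) (fun _ => (1:ℝ)) ω) = (ℙ (ESF i t)).toReal := by
      exact integral_indicator_one (hESFm i t)
    rw [this, hPESF, ENNReal.toReal_prod]
    exact Finset.prod_congr rfl fun s _ =>
      ENNReal.toReal_ofReal (by linarith [hγa1 i s])
  have hSFlb : ∀ i t, 1 - γ ≤ ∏ s ∈ Finset.Iio t, (1 - γ * a i s) := by
    intro i t
    refine le_trans ?_ (samp_aux_prod_one_sub _ _ (fun s _ => hγa0 i s) (fun s _ => hγa1 i s))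
    have h1 : ∑ s ∈ Finset.Iio t, γ * a i s ≤ γ := by
      calc ∑ s ∈ Finset.Iio t, γ * a i s ≤ ∑ s, γ * a i s :=
            Finset.sum_le_sum_of_subset_of_nonneg (Finset.subset_univ _)
              (fun s _ _ => hγa0 i s)
        _ = γ * ∑ s, a i s := by rw [Finset.mul_sum]
        _ ≤ γ * 1 := mul_le_mul_of_nonneg_left (hcap i) hγ0
        _ = γ := mul_one γ
    linarith
  -- χ as indicator
  set Eχ : F → Fin T → Set Ω :=
    fun f t => {ω | W t f ω = 1} ∩ ESF (ι f) t with hEχ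
  have hEχm : ∀ f t, MeasurableSet (Eχ f t) :=
    fun f t => (measurableSet_eq_fun (hWmeas t f) measurable_const).inter (hESFm (ι f) t)
  have hχind : ∀ f t, χ f t = Set.indicator (Eχ f t) (fun _ => (1:ℝ)) := by
    intro f t
    funext ω
    rw [hχ, hSFind]
    by_cases h1 : W t f ω = 1
    · by_cases h2 : ω ∈ ESF (ι f) t
      · have hmem : ω ∈ Eχ f t := Set.mem_inter h1 h2
        rw [Set.indicator_of_mem h2, Set.indicator_of_mem hmem, h1, mul_one]
      · have hnm : ω ∉ Eχ f t := fun hm => h2 (Set.mem_of_mem_inter_right hm)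
        rw [Set.indicator_of_notMem h2, Set.indicator_of_notMem hnm, mul_zero]
    · have h0 : W t f ω = 0 := (hW01 t f ω).resolve_right h1
      have hnm : ω ∉ Eχ f t := by
        intro hm
        obtain ⟨ha', -⟩ := hm
        exact h1 ha'
      rw [h0, zero_mul, Set.indicator_of_notMem hnm]
  have hPEχ : ∀ f t, ℙ (Eχ f t) =
      ENNReal.ofReal (γ * x f t * p f t) * ∏ s ∈ Finset.Iio t, ENNReal.ofReal (1 - γ * a (ι f) s) := by
    intro f t
    have htnot : t ∉ Finset.Iio t := by simp
    have key := hindep.measure_inter_preimage_eq_mul (insert t (Finset.Iio t))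
      (sets := fun s => if s = t then {v : F → ℝ | v f = 1} else Bs (ι f))
      (by
        intro s _
        by_cases h : s = t
        · simp only [h, if_pos rfl]
          exact measurableSet_eq_fun (measurable_pi_apply f) measurable_const
        · simp only [if_neg h]
          exact hBmeas (ι f))
    have hset : (⋂ s ∈ insert t (Finset.Iio t),
        V s ⁻¹' (if s = t then {v : F → ℝ | v f = 1} else Bs (ι f))) = Eχ f t := by
      rw [Finset.set_biInter_insert, if_pos rfl]
      have h2 : (⋂ s ∈ Finset.Iio t,
          V s ⁻¹' (if s = t then {v : F → ℝ | v f = 1} else Bs (ι f))) = ESF (ι f) t := by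
        rw [hESF]
        exact Set.iInter₂_congr fun s hs => by
          rw [if_neg (by rintro rfl; exact htnot hs)]
      rw [h2]
      rfl
    have h1 : ℙ (V t ⁻¹' {v : F → ℝ | v f = 1}) = ENNReal.ofReal (γ * x f t * p f t) := by
      rw [← hmarg t f]; rfl
    rw [← hset, key, Finset.prod_insert htnot]
    beta_reduce
    rw [if_pos rfl, h1]
    congr 1
    refine Finset.prod_congr rfl fun s hs => ?_
    rw [if_neg (by rintro rfl; exact htnot hs)]
    exact hA s (ι f)
  have hχint : ∀ f t, (∫ ω, χ f t ω) =
      (γ * x f t * p f t) * ∏ s ∈ Finset.Iio t, (1 - γ * a (ι f) s) := by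
    intro f t
    rw [hχind f t]
    have : (∫ ω, Set.indicator (Eχ f t) (fun _ => (1:ℝ)) ω) = (ℙ (Eχ f t)).toReal := by
      exact integral_indicator_one (hEχm f t)
    rw [this, hPEχ, ENNReal.toReal_mul, ENNReal.toReal_prod,
      ENNReal.toReal_ofReal (mul_nonneg (mul_nonneg hγ0 (hx f t).1) (hp f t).1)]
    congr 1
    exact Finset.prod_congr rfl fun s _ =>
      ENNReal.toReal_ofReal (by linarith [hγa1 (ι f) s])
  have hχlb : ∀ f t, (1 - γ) * (γ * x f t * p f t) ≤ ∫ ω, χ f t ω := by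
    intro f t
    rw [hχint f t, mul_comm]
    refine mul_le_mul_of_nonneg_left (hSFlb (ι f) t) (mul_nonneg (mul_nonneg hγ0 (hx f t).1) (hp f t).1)
  refine ⟨fun i t => ⟨hSFint i t, (hSFint i t) ▸ hSFlb i t⟩, hχlb, ?_⟩
  intro w hw
  have hint : ∀ (f : F) (t : Fin T), Integrable (fun ω => w f t * χ f t ω) ℙ := by
    intro f t
    have heq : (fun ω => w f t * χ f t ω) =
        fun ω => w f t * Set.indicator (Eχ f t) (fun _ => (1:ℝ)) ω := by
      funext ω; rw [hχind f t]
    rw [heq]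
    exact ((integrable_const (1:ℝ)).indicator (hEχm f t)).const_mul _
  have hsplit : (∫ ω, ∑ t, ∑ f, w f t * χ f t ω) = ∑ t, ∑ f, w f t * ∫ ω, χ f t ω := by
    rw [integral_finset_sum _ (fun t _ => integrable_finset_sum _ (fun f _ => hint f t))]
    refine Finset.sum_congr rfl fun t _ => ?_
    rw [integral_finset_sum _ (fun f _ => hint f t)]
    exact Finset.sum_congr rfl fun f _ => integral_const_mul _ _
  rw [hsplit]
  have hterm : ∀ (t : Fin T) (f : F),
      γ * (1 - γ) * (w f t * x f t * p f t) ≤ w f t * ∫ ω, χ f t ω := by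
    intro t f
    refine le_trans (le_of_eq ?_) (mul_le_mul_of_nonneg_left (hχlb f t) (hw f t))
    ring
  calc γ * (1 - γ) * ∑ t, ∑ f, w f t * x f t * p f t
      = ∑ t, ∑ f, γ * (1 - γ) * (w f t * x f t * p f t) := by
        rw [Finset.mul_sum]; exact Finset.sum_congr rfl fun t _ => by rw [Finset.mul_sum]
    _ ≤ ∑ t, ∑ f, w f t * ∫ ω, χ f t ω :=
        Finset.sum_le_sum fun t _ => Finset.sum_le_sum fun f _ => hterm t f
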